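/- arXiv:1608.08704 — 3 statements merged into one kernel-verified Lean document; each statement's English description precedes it below -/
import Mathlib

section
/- Let G = (U ⊔ V, E) be a bipartite graph such that every left subset U' ⊆ U with |U'| ≤ s (s ≥ 1) has boundary of size at least c·|U'| with c > 0, where the boundary ∂(U') is the set of right vertices having exactly one neighbour in U'. Then for every U' ⊆ U with |U'| = t ≤ s there is an ordering u₁,…,u_t of U' and right vertices v₁,…,v_t such that vᵢ ∈ N(uᵢ) \ N({u₁,…,u_{i−1}}) for each i. -/
/-- The set of right neighbours of a left set `U'` in a bipartite graph given by
its left-neighbourhood function `N`. -/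
def nbhdSet {α β : Type*} [DecidableEq α] [DecidableEq β]
    (N : α → Finset β) (U' : Finset α) : Finset β :=
  U'.biUnion N

/-- The boundary of `U'`: right vertices having a unique neighbour in `U'`. -/
def bdry {α β : Type*} [DecidableEq α] [DecidableEq β]
    (N : α → Finset β) (U' : Finset α) : Finset β :=
  (U'.biUnion N).filter (fun v => (U'.filter (fun u => v ∈ N u)).card = 1)

/-- Peeling lemma: in an `(s,c)`-boundary expander with `s ≥ 1` and `c > 0`,
every left set `U'` of size `t ≤ s` admits an ordering `u₁,…,u_t` and right
vertices `v₁,…,v_t` with `vᵢ ∈ N(uᵢ) \ N({u₁,…,u_{i−1}})`. -/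
theorem peeling_lemma {α β : Type*} [DecidableEq α] [DecidableEq β]
    (N : α → Finset β) (s : ℕ) (c : ℝ) (hs : 1 ≤ s) (hc : 0 < c)
    (hexp : ∀ U' : Finset α, U'.card ≤ s →
      c * (U'.card : ℝ) ≤ ((bdry N U').card : ℝ))
    (U' : Finset α) (t : ℕ) (ht : U'.card = t) (hts : t ≤ s) :
    ∃ u : Fin t → α, ∃ v : Fin t → β,
      Function.Injective u ∧ (∀ i, u i ∈ U') ∧
      ∀ i : Fin t, v i ∈ N (u i) ∧ ∀ j : Fin t, j < i → v i ∉ N (u j) := by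
  revert ht hts
  induction t generalizing U' with
  | zero =>
    intro _ _
    exact ⟨Fin.elim0, Fin.elim0, Function.injective_of_subsingleton _,
      fun i => i.elim0, fun i => i.elim0⟩
  | succ t ih =>
    intro ht hts
    have h1 : c * (U'.card : ℝ) ≤ (bdry N U').card := hexp U' (ht ▸ hts)
    have hpos : 0 < (bdry N U').card := by
      have h2 : (0:ℝ) < c * (U'.card : ℝ) := by
        rw [ht]; positivity
      exact_mod_cast h2.trans_le h1
    obtain ⟨v0, hv0⟩ := Finset.card_pos.mp hpos
    rw [bdry, Finset.mem_filter] at hv0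
    obtain ⟨hvN, hcard⟩ := hv0
    obtain ⟨u0, hu0⟩ := Finset.card_eq_one.mp hcard
    have hu0mem : u0 ∈ U' ∧ v0 ∈ N u0 := by
      have h := hu0 ▸ Finset.mem_singleton_self u0
      simpa using h
    have hunique : ∀ w ∈ U', w ≠ u0 → v0 ∉ N w := by
      intro w hw hne hvn
      have h : w ∈ U'.filter (fun u => v0 ∈ N u) := Finset.mem_filter.mpr ⟨hw, hvn⟩
      rw [hu0, Finset.mem_singleton] at h
      exact hne h
    have hcard' : (U'.erase u0).card = t := by
      rw [Finset.card_erase_of_mem hu0mem.1, ht]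
      omega
    obtain ⟨u, v, hinj, hmem, hcond⟩ :=
      ih (U'.erase u0) hcard' (le_trans (Nat.le_succ t) hts)
    refine ⟨Fin.snoc u u0, Fin.snoc v v0, ?_, ?_, ?_⟩
    · intro i j hij
      induction i using Fin.lastCases with
      | last =>
        induction j using Fin.lastCases with
        | last => rfl
        | cast j =>
          rw [Fin.snoc_last, Fin.snoc_castSucc] at hij
          exact absurd (hij ▸ hmem j) (Finset.notMem_erase u0 U')
      | cast i =>
        induction j using Fin.lastCases with
        | last =>
          rw [Fin.snoc_last, Fin.snoc_castSucc] at hij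
          exact absurd (hij ▸ hmem i) (Finset.notMem_erase u0 U')
        | cast j =>
          rw [Fin.snoc_castSucc, Fin.snoc_castSucc] at hij
          exact congrArg Fin.castSucc (hinj hij)
    · intro i
      induction i using Fin.lastCases with
      | last => rw [Fin.snoc_last]; exact hu0mem.1
      | cast i => rw [Fin.snoc_castSucc]; exact Finset.mem_of_mem_erase (hmem i)
    · intro i
      induction i using Fin.lastCases with
      | last =>
        refine ⟨by simp only [Fin.snoc_last]; exact hu0mem.2, ?_⟩
        intro j hj
        induction j using Fin.lastCases with
        | last => exact absurd hj (lt_irrefl _)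
        | cast j =>
          rw [Fin.snoc_last, Fin.snoc_castSucc]
          have hjm := hmem j
          exact hunique _ (Finset.mem_of_mem_erase hjm)
            (Finset.ne_of_mem_erase hjm)
      | cast i =>
        refine ⟨by simp only [Fin.snoc_castSucc]; exact (hcond i).1, ?_⟩
        intro j hj
        induction j using Fin.lastCases with
        | last => exact absurd hj (not_lt.mpr (Fin.le_last _))
        | cast j =>
          rw [Fin.snoc_castSucc, Fin.snoc_castSucc]
          exact (hcond i).2 j (Fin.castSucc_lt_castSucc_iff.mp hj)
end

section
/- Let G = (U ⊔ V, E) be a bipartite graph with left degree at most Δ. For any left subset U' ⊆ U, the number of right neighbours of U' that are not in the boundary of U' is at most (Δ·|U'| − |∂(U')|)/2; consequently |N(U')| ≤ (|∂(U')| + Δ·|U'|)/2. -/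
/-- In a bipartite graph with left degree at most `Δ`, the number of neighbours
of `U'` outside the boundary is at most `(Δ|U'| − |∂(U')|)/2`, and consequently
`|N(U')| ≤ (|∂(U')| + Δ|U'|)/2`. -/
theorem nbhd_card_bound {α β : Type*} [DecidableEq α] [DecidableEq β]
    (N : α → Finset β) (Δ : ℕ) (hdeg : ∀ u : α, (N u).card ≤ Δ)
    (U' : Finset α) :
    (((U'.biUnion N \ bdry N U').card : ℝ) ≤
        ((Δ : ℝ) * (U'.card : ℝ) - ((bdry N U').card : ℝ)) / 2) ∧
      (((U'.biUnion N).card : ℝ) ≤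
        (((bdry N U').card : ℝ) + (Δ : ℝ) * (U'.card : ℝ)) / 2) := by
  classical
  set S := U'.biUnion N with hS
  set B := bdry N U' with hB
  set d : β → ℕ := fun v => (U'.filter (fun u => v ∈ N u)).card with hd
  have hBsub : B ⊆ S := Finset.filter_subset _ _
  -- double counting
  have key : ∑ v ∈ S, d v = ∑ u ∈ U', (N u).card := by
    simp_rw [hd, Finset.card_filter]
    rw [Finset.sum_comm]
    refine Finset.sum_congr rfl fun u hu => ?_
    rw [← Finset.card_filter]
    congr 1
    ext v
    simp only [Finset.mem_filter, hS, Finset.mem_biUnion]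
    exact ⟨fun h => h.2, fun h => ⟨⟨u, hu, h⟩, h⟩⟩
  have hsum_le : ∑ u ∈ U', (N u).card ≤ U'.card * Δ :=
    Finset.sum_le_card_nsmul _ _ _ fun u _ => hdeg u
  have hsumB : ∑ v ∈ B, d v = B.card := by
    rw [Finset.card_eq_sum_ones]
    refine Finset.sum_congr rfl fun v hv => ?_
    exact (Finset.mem_filter.mp hv).2
  have hsumSB : 2 * (S \ B).card ≤ ∑ v ∈ S \ B, d v := by
    rw [mul_comm, ← smul_eq_mul]
    refine Finset.card_nsmul_le_sum _ _ _ fun v hv => ?_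
    rw [Finset.mem_sdiff] at hv
    have h1 : 1 ≤ d v := by
      obtain ⟨u, hu, hvu⟩ := Finset.mem_biUnion.mp hv.1
      exact Finset.card_pos.mpr ⟨u, Finset.mem_filter.mpr ⟨hu, hvu⟩⟩
    have hne : d v ≠ 1 := fun h => hv.2 (Finset.mem_filter.mpr ⟨hv.1, h⟩)
    omega
  have hsplit : ∑ v ∈ S \ B, d v + ∑ v ∈ B, d v = ∑ v ∈ S, d v :=
    Finset.sum_sdiff hBsub
  have hmain : B.card + 2 * (S \ B).card ≤ Δ * U'.card := by
    rw [mul_comm] at hsum_le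
    linarith [hsumSB, hsumB, hsplit, key, hsum_le]
  have hcard : (S \ B).card + B.card = S.card :=
    Finset.card_sdiff_add_card_eq_card hBsub
  have hR : (B.card : ℝ) + 2 * ((S \ B).card : ℝ) ≤ (Δ : ℝ) * (U'.card : ℝ) := by
    exact_mod_cast hmain
  have hRc : ((S \ B).card : ℝ) + (B.card : ℝ) = (S.card : ℝ) := by exact_mod_cast hcard
  constructor <;> [skip; skip] <;> linarith
end

section
/- There is an absolute constant Δ₀ ∈ ℕ such that for all integers Δ, s, and n satisfying Δ ≥ Δ₀ and (sΔ)^{2Δ} ≤ n, there exists a bipartite graph with n left vertices and ⌈n^{3/Δ}⌉ right vertices, left degree at most Δ, that is an (s,2)-boundary expander. -/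
open Finset


-- (1+1/t)^t type bound: (t+1)^t ≤ 4*t^t
lemma succ_pow_le (t : ℕ) : (t+1)^t ≤ 4 * t^t := by
  rcases Nat.eq_zero_or_pos t with h | h
  · subst h; norm_num
  have key : ((t:ℝ)+1)^t ≤ 3 * (t:ℝ)^t := by
    have h1 : ((t:ℝ)+1) ≤ (t:ℝ) * Real.exp (1/t) := by
      have := Real.add_one_le_exp (1/(t:ℝ))
      have ht : (0:ℝ) < t := by exact_mod_cast h
      calc ((t:ℝ)+1) = (t:ℝ) * (1/t + 1) := by field_simp; ring
        _ ≤ (t:ℝ) * Real.exp (1/t) := by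
            exact mul_le_mul_of_nonneg_left this ht.le
    calc ((t:ℝ)+1)^t ≤ ((t:ℝ) * Real.exp (1/t))^t := by
          apply pow_le_pow_left₀ (by positivity) h1
      _ = (t:ℝ)^t * (Real.exp (1/t))^t := by rw [mul_pow]
      _ = (t:ℝ)^t * Real.exp 1 := by
          rw [← Real.exp_nat_mul]
          congr 1
          have ht : (t:ℝ) ≠ 0 := by positivity
          field_simp
      _ ≤ (t:ℝ)^t * 3 := by
          apply mul_le_mul_of_nonneg_left _ (by positivity)
          have := Real.exp_one_lt_d9
          linarith
      _ = 3 * (t:ℝ)^t := by ring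
  have : (((t+1)^t : ℕ) : ℝ) ≤ (((4 * t^t) : ℕ) : ℝ) := by
    push_cast
    nlinarith [pow_nonneg (by positivity : (0:ℝ) ≤ (t:ℝ)) t]
  exact_mod_cast this

lemma pow_self_le (t : ℕ) : t^t ≤ 4^t * t.factorial := by
  induction t with
  | zero => simp
  | succ t ih =>
    calc (t+1)^(t+1) = (t+1)^t * (t+1) := by ring
      _ ≤ (4 * t^t) * (t+1) := Nat.mul_le_mul_right _ (succ_pow_le t)
      _ ≤ (4 * (4^t * t.factorial)) * (t+1) := Nat.mul_le_mul_right _ (Nat.mul_le_mul_left _ ih)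
      _ = 4^(t+1) * (t+1).factorial := by rw [Nat.factorial_succ]; ring



lemma main_ineq {Δ s n m k t : ℕ} (hΔ : 131072 ≤ Δ) (hk : 1 ≤ k) (hks : k ≤ s)
    (hn : (s*Δ)^(2*Δ) ≤ n) (hm : n^3 ≤ m^Δ) (ht : 2*t + 1 ≤ k*Δ + 2*k) :
    2*s*(n.choose k)*(m.choose t)*t^(k*Δ) ≤ m^(k*Δ) := by
  have hs1 : 1 ≤ s := hk.trans hks
  have hΔ0 : 0 < Δ := by omega
  have hsΔ1 : 1 ≤ s * Δ := Nat.one_le_iff_ne_zero.mpr (by positivity)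
  have hn1 : 1 ≤ n := le_trans (Nat.one_le_pow _ _ hsΔ1) hn
  -- a := k*Δ
  set a := k * Δ with ha
  have h14k : 14 * k ≤ a := by
    calc 14 * k ≤ Δ * k := Nat.mul_le_mul_right _ (by omega)
      _ = a := by rw [ha]; ring
  have hta : t ≤ a := by omega
  set e := a - t with he
  have hte : t + e = a := by omega
  have hee : a + 1 ≤ 2*e + 2*k := by omega
  -- key exponent facts
  have h5e : 2*a + 3 ≤ 5 * e := by omega
  set c := 5*e - (2*a + 1) with hc
  have hcsum : k*(2*Δ) + c + (e+1) = 6*e := by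
    have : k*(2*Δ) = 2*a := by rw [ha]; ring
    omega
  have h4a34c : 4*a ≤ 34*c := by omega
  -- n ≥ 2^(34Δ)
  have hn34 : 2^(34*Δ) ≤ n := by
    calc (2:ℕ)^(34*Δ) = (2^17)^(2*Δ) := by rw [← pow_mul]; ring_nf
      _ ≤ (s*Δ)^(2*Δ) := by
          apply Nat.pow_le_pow_left
          calc (2:ℕ)^17 = 131072 := by norm_num
            _ ≤ Δ := hΔ
            _ ≤ s * Δ := Nat.le_mul_of_pos_left _ hs1
      _ ≤ n := hn
  -- bound 4^(a*(2Δ)) ≤ n^c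
  have h4c : 4^(a*(2*Δ)) ≤ n^c := by
    calc (4:ℕ)^(a*(2*Δ)) = 2^(4*a*Δ) := by
          rw [show (4:ℕ) = 2^2 by norm_num, ← pow_mul]; ring_nf
      _ ≤ 2^(34*Δ*c) := by
          apply Nat.pow_le_pow_right (by norm_num)
          calc 4*a*Δ = (4*a)*Δ := by ring
            _ ≤ (34*c)*Δ := Nat.mul_le_mul_right _ h4a34c
            _ = 34*Δ*c := by ring
      _ = (2^(34*Δ))^c := by rw [← pow_mul]
      _ ≤ n^c := Nat.pow_le_pow_left hn34 _
  -- core: Y ≤ m^e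
  have hY : n^k * 4^a * (s*Δ)^(e+1) ≤ m^e := by
    rw [← Nat.pow_le_pow_iff_left (show 2*Δ ≠ 0 by omega)]
    calc (n^k * 4^a * (s*Δ)^(e+1))^(2*Δ)
        = n^(k*(2*Δ)) * 4^(a*(2*Δ)) * ((s*Δ)^(2*Δ))^(e+1) := by
          rw [mul_pow, mul_pow, ← pow_mul, ← pow_mul, ← pow_mul, ← pow_mul]
          ring_nf
      _ ≤ n^(k*(2*Δ)) * n^c * n^(e+1) := by
          apply Nat.mul_le_mul (Nat.mul_le_mul_left _ h4c) (Nat.pow_le_pow_left hn _)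
      _ = n^(6*e) := by rw [← pow_add, ← pow_add, hcsum]
      _ = (n^3)^(2*e) := by rw [← pow_mul]; ring_nf
      _ ≤ (m^Δ)^(2*e) := Nat.pow_le_pow_left hm _
      _ = (m^e)^(2*Δ) := by rw [← pow_mul, ← pow_mul]; ring_nf
  -- assemble
  have hchoose_n : n.choose k ≤ n^k := Nat.choose_le_pow _ _
  have hchoose_m : m.choose t * t.factorial ≤ m^t := by
    have h1 : t.factorial * m.choose t ≤ m^t := by
      rw [← Nat.descFactorial_eq_factorial_mul_choose]
      exact Nat.descFactorial_le_pow _ _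
    rwa [Nat.mul_comm] at h1
  have hmt : m.choose t * t^a ≤ 4^t * m^t * t^e := by
    calc m.choose t * t^a = m.choose t * (t^t * t^e) := by rw [← pow_add, hte]
      _ ≤ m.choose t * ((4^t * t.factorial) * t^e) :=
          Nat.mul_le_mul_left _ (Nat.mul_le_mul_right _ (pow_self_le t))
      _ = (m.choose t * t.factorial) * 4^t * t^e := by ring
      _ ≤ m^t * 4^t * t^e := by
          apply Nat.mul_le_mul_right
          exact Nat.mul_le_mul_right _ hchoose_m
      _ = 4^t * m^t * t^e := by ring
  calc 2*s*(n.choose k)*(m.choose t)*t^a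
      = (2*s)*(n.choose k)*(m.choose t * t^a) := by ring
    _ ≤ (s*Δ)*(n^k)*(4^t * m^t * t^e) := by
        apply Nat.mul_le_mul _ hmt
        refine Nat.mul_le_mul ?_ hchoose_n
        calc 2*s = s*2 := by ring
          _ ≤ s*Δ := Nat.mul_le_mul_left _ (by omega)
    _ ≤ (s*Δ)*(n^k)*(4^a * m^t * (s*Δ)^e) := by
        apply Nat.mul_le_mul_left
        apply Nat.mul_le_mul
        · exact Nat.mul_le_mul (Nat.pow_le_pow_right (by norm_num) hta) le_rfl
        · exact Nat.pow_le_pow_left (le_trans hta (by rw [ha]; exact Nat.mul_le_mul_right _ hks)) _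
    _ = (n^k * 4^a * (s*Δ)^(e+1)) * m^t := by ring
    _ ≤ m^e * m^t := Nat.mul_le_mul_right _ hY
    _ = m^a := by rw [← pow_add, Nat.add_comm e t, hte]



lemma bdry_count {n Δ m : ℕ} (f : Fin n → Fin Δ → Fin m) (U' : Finset (Fin n)) :
    2 * (U'.biUnion fun u => Finset.image (f u) Finset.univ).card ≤
      U'.card * Δ + (bdry (fun u => Finset.image (f u) Finset.univ) U').card := by
  classical
  set N : Fin n → Finset (Fin m) := fun u => Finset.image (f u) Finset.univ with hN
  set Γ := U'.biUnion N with hΓ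
  set B := bdry N U' with hB
  have hBΓ : B ⊆ Γ := filter_subset _ _
  set w : Fin m → ℕ := fun v => ((U' ×ˢ (univ : Finset (Fin Δ))).filter
    (fun p => f p.1 p.2 = v)).card with hw
  have hsum : (U' ×ˢ (univ : Finset (Fin Δ))).card = ∑ v ∈ Γ, w v := by
    apply Finset.card_eq_sum_card_fiberwise
    intro p hp
    rw [Finset.mem_coe, Finset.mem_product] at hp
    exact Finset.mem_biUnion.mpr ⟨p.1, hp.1, Finset.mem_image.mpr ⟨p.2, Finset.mem_univ _, rfl⟩⟩
  have hpoint : ∀ v ∈ Γ, 2 ≤ w v + (if v ∈ B then 1 else 0) := by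
    intro v hv
    obtain ⟨u, hu, hvu⟩ := Finset.mem_biUnion.mp hv
    obtain ⟨i, -, hfi⟩ := Finset.mem_image.mp hvu
    have hmem : (u, i) ∈ (U' ×ˢ (univ : Finset (Fin Δ))).filter (fun p => f p.1 p.2 = v) := by
      simp [Finset.mem_filter, Finset.mem_product, hu, hfi]
    by_cases hvB : v ∈ B
    · have : 1 ≤ w v := Finset.card_pos.mpr ⟨_, hmem⟩
      simp [hvB]; omega
    · -- v has ≥ 2 neighbours in U'
      have hcnt : (U'.filter (fun u => v ∈ N u)).card ≠ 1 := by
        intro h1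
        exact hvB (Finset.mem_filter.mpr ⟨hv, h1⟩)
      have hcnt1 : 1 ≤ (U'.filter (fun u => v ∈ N u)).card :=
        Finset.card_pos.mpr ⟨u, Finset.mem_filter.mpr ⟨hu, hvu⟩⟩
      have hcnt2 : 1 < (U'.filter (fun u => v ∈ N u)).card := by omega
      obtain ⟨u₁, hu₁, u₂, hu₂, hne⟩ := Finset.one_lt_card.mp hcnt2
      obtain ⟨hu₁U, hvu₁⟩ := Finset.mem_filter.mp hu₁
      obtain ⟨hu₂U, hvu₂⟩ := Finset.mem_filter.mp hu₂
      obtain ⟨i₁, -, hfi₁⟩ := Finset.mem_image.mp hvu₁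
      obtain ⟨i₂, -, hfi₂⟩ := Finset.mem_image.mp hvu₂
      have hm₁ : (u₁, i₁) ∈ (U' ×ˢ (univ : Finset (Fin Δ))).filter (fun p => f p.1 p.2 = v) := by
        simp [Finset.mem_filter, Finset.mem_product, hu₁U, hfi₁]
      have hm₂ : (u₂, i₂) ∈ (U' ×ˢ (univ : Finset (Fin Δ))).filter (fun p => f p.1 p.2 = v) := by
        simp [Finset.mem_filter, Finset.mem_product, hu₂U, hfi₂]
      have : 1 < w v := Finset.one_lt_card.mpr
        ⟨_, hm₁, _, hm₂, by simp [Prod.ext_iff]; intro h; exact absurd h hne⟩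
      simp only [if_neg hvB]
      omega
  calc 2 * Γ.card = ∑ _v ∈ Γ, 2 := by rw [Finset.sum_const, smul_eq_mul, mul_comm]
    _ ≤ ∑ v ∈ Γ, (w v + (if v ∈ B then 1 else 0)) := Finset.sum_le_sum hpoint
    _ = (∑ v ∈ Γ, w v) + ∑ v ∈ Γ, (if v ∈ B then 1 else 0) := Finset.sum_add_distrib
    _ = U'.card * Δ + B.card := by
        congr 1
        · rw [← hsum, Finset.card_product, Finset.card_univ, Fintype.card_fin]
        · rw [Finset.sum_ite_mem, Finset.inter_eq_right.mpr hBΓ, Finset.sum_const,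
            smul_eq_mul, mul_one]



lemma exists_good (Δ s n m : ℕ) (hΔ : 131072 ≤ Δ) (hs : 1 ≤ s)
    (hn : (s*Δ)^(2*Δ) ≤ n) (hm : n^3 ≤ m^Δ) :
    ∃ f : Fin n → Fin Δ → Fin m, ∀ U' : Finset (Fin n), U'.card ≤ s →
      2*U'.card ≤ (bdry (fun u => Finset.image (f u) Finset.univ) U').card := by
  classical
  have hΔ0 : 0 < Δ := by omega
  have hsΔ1 : 1 ≤ s * Δ := Nat.one_le_iff_ne_zero.mpr (Nat.mul_ne_zero (by omega) (by omega))
  have hn1 : 1 ≤ n := le_trans (Nat.one_le_pow _ _ hsΔ1) hn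
  have hm1 : 1 ≤ m := by
    rcases Nat.eq_zero_or_pos m with h | h
    · exfalso
      subst h
      rw [Nat.zero_pow hΔ0] at hm
      have := Nat.one_le_pow 3 n hn1
      omega
    · exact h
  have hsΔm : s * Δ ≤ m := by
    have h6 : ((s*Δ)^6)^Δ ≤ m^Δ := by
      calc ((s*Δ)^6)^Δ = ((s*Δ)^(2*Δ))^3 := by rw [← pow_mul, ← pow_mul]; ring_nf
        _ ≤ n^3 := Nat.pow_le_pow_left hn _
        _ ≤ m^Δ := hm
    have h7 : (s*Δ)^6 ≤ m := by
      exact (Nat.pow_le_pow_iff_left (by omega)).mp h6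
    calc s*Δ ≤ (s*Δ)^6 := Nat.le_self_pow (by norm_num) _
      _ ≤ m := h7
  have hsn : s ≤ n := by
    calc s ≤ s*Δ := Nat.le_mul_of_pos_right _ hΔ0
      _ ≤ (s*Δ)^(2*Δ) := Nat.le_self_pow (by omega) _
      _ ≤ n := hn
  by_contra hcon
  push_neg at hcon
  -- every f is bad
  set tk : ℕ → ℕ := fun k => (k*Δ + 2*k - 1)/2 with htk
  have htk_bound : ∀ k, 1 ≤ k → 2 * tk k + 1 ≤ k*Δ + 2*k := by
    intro k hk
    have h2 : 2*k ≤ k*Δ := by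
      calc 2*k = k*2 := by ring
        _ ≤ k*Δ := Nat.mul_le_mul_left _ (by omega)
    have := Nat.div_mul_le_self (k*Δ + 2*k - 1) 2
    have h3 : 2 * ((k*Δ + 2*k - 1)/2) ≤ k*Δ + 2*k - 1 := by
      rw [Nat.mul_comm]; exact Nat.div_mul_le_self _ _
    simp only [htk]
    omega
  have htk_le_m : ∀ k, 1 ≤ k → k ≤ s → tk k ≤ m := by
    intro k hk hks
    have h2 : 2*k ≤ k*Δ := by
      calc 2*k = k*2 := by ring
        _ ≤ k*Δ := Nat.mul_le_mul_left _ (by omega)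
    have := htk_bound k hk
    have hkΔ : k*Δ ≤ s*Δ := Nat.mul_le_mul_right _ hks
    omega
  set S : Finset (Fin n) → Finset (Fin m) → Finset (Fin n → Fin Δ → Fin m) :=
    fun U' T => Fintype.piFinset (fun u => if u ∈ U'
      then Fintype.piFinset (fun _ : Fin Δ => T)
      else Finset.univ) with hS
  set K : Finset (Finset (Fin n)) :=
    Finset.univ.powerset.filter (fun A => 1 ≤ A.card ∧ A.card ≤ s) with hK
  -- the covering
  have hsub : (Finset.univ : Finset (Fin n → Fin Δ → Fin m)) ⊆
      K.biUnion (fun U' => (Finset.powersetCard (tk U'.card) Finset.univ).biUnion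
        (fun T => S U' T)) := by
    intro f _
    obtain ⟨U', hUs, hUb⟩ := hcon f
    have hk1 : 1 ≤ U'.card := by omega
    have hΓcard : (U'.biUnion fun u => Finset.image (f u) Finset.univ).card ≤ tk U'.card := by
      have h1 := bdry_count f U'
      simp only [htk]
      rw [Nat.le_div_iff_mul_le (by norm_num : 0 < 2)]
      omega
    obtain ⟨T, hΓT, -, hTcard⟩ :=
      Finset.exists_subsuperset_card_eq
        (Finset.subset_univ (U'.biUnion fun u => Finset.image (f u) Finset.univ))
        hΓcard
        (by rw [Finset.card_univ, Fintype.card_fin]; exact htk_le_m U'.card hk1 hUs)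
    apply Finset.mem_biUnion.mpr
    refine ⟨U', ?_, ?_⟩
    · rw [hK]; simp only [Finset.mem_filter, Finset.mem_powerset]
      exact ⟨Finset.subset_univ _, hk1, hUs⟩
    apply Finset.mem_biUnion.mpr
    refine ⟨T, Finset.mem_powersetCard_univ.mpr hTcard, ?_⟩
    rw [hS]
    apply Fintype.mem_piFinset.mpr
    intro u
    by_cases hu : u ∈ U'
    · rw [if_pos hu]
      apply Fintype.mem_piFinset.mpr
      intro i
      apply hΓT
      exact Finset.mem_biUnion.mpr ⟨u, hu, Finset.mem_image.mpr ⟨i, Finset.mem_univ _, rfl⟩⟩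
    · rw [if_neg hu]; exact Finset.mem_univ _
  -- cardinality of S
  have hScard : ∀ (U' : Finset (Fin n)) (T : Finset (Fin m)),
      (S U' T).card = (T.card^Δ)^U'.card * (m^Δ)^(n - U'.card) := by
    intro U' T
    rw [hS]
    rw [Fintype.card_piFinset]
    have hpoint : ∀ u : Fin n, (if u ∈ U' then Fintype.piFinset (fun _ : Fin Δ => T)
        else (Finset.univ : Finset (Fin Δ → Fin m))).card
        = if u ∈ U' then T.card^Δ else m^Δ := by
      intro u
      by_cases hu : u ∈ U'
      · rw [if_pos hu, if_pos hu, Fintype.card_piFinset]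
        simp [Finset.prod_const, Finset.card_univ]
      · rw [if_neg hu, if_neg hu, Finset.card_univ]
        simp [Fintype.card_fun]
    rw [Finset.prod_congr rfl (fun u _ => hpoint u)]
    rw [Finset.prod_ite]
    have e1 : Finset.univ.filter (fun u => u ∈ U') = U' := by ext u; simp
    have e2 : Finset.univ.filter (fun u => ¬ u ∈ U') = U'ᶜ := by ext u; simp
    rw [e1, e2, Finset.prod_const, Finset.prod_const, Finset.card_compl,
      Fintype.card_fin]
  -- abbreviations
  set g : ℕ → ℕ := fun k => (m.choose (tk k)) * ((tk k)^Δ)^k * (m^Δ)^(n-k) with hg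
  set M : ℕ := (m^Δ)^n with hM
  -- total count bound
  have hcard1 : M ≤ ∑ U' ∈ K, g U'.card := by
    calc M = Fintype.card (Fin n → Fin Δ → Fin m) := by
          rw [Fintype.card_fun, Fintype.card_fun, Fintype.card_fin, Fintype.card_fin,
            Fintype.card_fin]
      _ = (Finset.univ : Finset (Fin n → Fin Δ → Fin m)).card := (Finset.card_univ).symm
      _ ≤ (K.biUnion (fun U' => (Finset.powersetCard (tk U'.card) Finset.univ).biUnion
            (fun T => S U' T))).card := Finset.card_le_card hsub
      _ ≤ ∑ U' ∈ K, ((Finset.powersetCard (tk U'.card) Finset.univ).biUnion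
            (fun T => S U' T)).card := Finset.card_biUnion_le
      _ ≤ ∑ U' ∈ K, ∑ T ∈ Finset.powersetCard (tk U'.card) Finset.univ, (S U' T).card :=
          Finset.sum_le_sum (fun U' _ => Finset.card_biUnion_le)
      _ = ∑ U' ∈ K, g U'.card := by
          apply Finset.sum_congr rfl
          intro U' _
          have h1 : ∀ T ∈ Finset.powersetCard (tk U'.card) Finset.univ,
              (S U' T).card = ((tk U'.card)^Δ)^U'.card * (m^Δ)^(n - U'.card) := by
            intro T hT
            rw [hScard U' T, Finset.mem_powersetCard_univ.mp hT]
          rw [Finset.sum_congr rfl h1, Finset.sum_const, Finset.card_powersetCard,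
            Finset.card_univ, Fintype.card_fin, smul_eq_mul]
          simp only [hg]
          ring
  -- group by cardinality
  have hdisj : (↑(Finset.Icc 1 s) : Set ℕ).PairwiseDisjoint
      (fun k => Finset.powersetCard k (Finset.univ : Finset (Fin n))) := by
    intro a _ b _ hab
    apply Finset.disjoint_left.mpr
    intro A hA hB
    exact hab ((Finset.mem_powersetCard_univ.mp hA).symm.trans
      (Finset.mem_powersetCard_univ.mp hB))
  have hK2 : ∑ U' ∈ K, g U'.card ≤ ∑ k ∈ Finset.Icc 1 s, n.choose k * g k := by
    have hsubK : K ⊆ (Finset.Icc 1 s).biUnion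
        (fun k => Finset.powersetCard k Finset.univ) := by
      intro U' hU
      rw [hK] at hU
      simp only [Finset.mem_filter, Finset.mem_powerset] at hU
      exact Finset.mem_biUnion.mpr ⟨U'.card, Finset.mem_Icc.mpr ⟨hU.2.1, hU.2.2⟩,
        Finset.mem_powersetCard_univ.mpr rfl⟩
    calc ∑ U' ∈ K, g U'.card
        ≤ ∑ U' ∈ (Finset.Icc 1 s).biUnion (fun k => Finset.powersetCard k Finset.univ),
            g U'.card := Finset.sum_le_sum_of_subset hsubK
      _ = ∑ k ∈ Finset.Icc 1 s, ∑ U' ∈ Finset.powersetCard k Finset.univ, g U'.card :=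
          Finset.sum_biUnion hdisj
      _ = ∑ k ∈ Finset.Icc 1 s, n.choose k * g k := by
          apply Finset.sum_congr rfl
          intro k _
          rw [Finset.sum_congr rfl
            (fun U' hU' => by rw [Finset.mem_powersetCard_univ.mp hU']),
            Finset.sum_const, Finset.card_powersetCard, Finset.card_univ, Fintype.card_fin,
            smul_eq_mul]
  -- per-k bound
  have hperk : ∀ k ∈ Finset.Icc 1 s, 2*s*(n.choose k * g k) ≤ M := by
    intro k hkmem
    rw [Finset.mem_Icc] at hkmem
    obtain ⟨hk1, hks⟩ := hkmem
    have hmain := main_ineq hΔ hk1 hks hn hm (htk_bound k hk1)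
    have hppow : ∀ (x : ℕ), (x^Δ)^k = x^(k*Δ) := fun x => by
      rw [← pow_mul, Nat.mul_comm]
    have hnk : k + (n - k) = n := by omega
    calc 2*s*(n.choose k * g k)
        = (2*s*(n.choose k)*(m.choose (tk k))*(tk k)^(k*Δ)) * (m^Δ)^(n-k) := by
          simp only [hg]
          rw [hppow]
          ring
      _ ≤ m^(k*Δ) * (m^Δ)^(n-k) := Nat.mul_le_mul_right _ hmain
      _ = (m^Δ)^k * (m^Δ)^(n-k) := by rw [hppow]
      _ = M := by rw [← pow_add, hnk, hM]
  -- combine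
  have hsum2 : 2*s*(∑ k ∈ Finset.Icc 1 s, n.choose k * g k) ≤ s * M := by
    rw [Finset.mul_sum]
    calc ∑ k ∈ Finset.Icc 1 s, 2*s*(n.choose k * g k)
        ≤ ∑ _k ∈ Finset.Icc 1 s, M := Finset.sum_le_sum hperk
      _ = (Finset.Icc 1 s).card * M := by rw [Finset.sum_const, smul_eq_mul]
      _ = s * M := by rw [Nat.card_Icc, Nat.add_sub_cancel]
  have hM1 : 1 ≤ M := Nat.one_le_pow _ _ (Nat.one_le_pow _ _ hm1)
  have hfinal : 2 * (∑ k ∈ Finset.Icc 1 s, n.choose k * g k) ≤ M := by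
    apply Nat.le_of_mul_le_mul_left _ hs
    calc s * (2 * ∑ k ∈ Finset.Icc 1 s, n.choose k * g k)
        = 2*s*(∑ k ∈ Finset.Icc 1 s, n.choose k * g k) := by ring
      _ ≤ s * M := hsum2
  have := hcard1.trans hK2
  omega

/-- There is an absolute constant `Δ₀` such that for all `Δ ≥ Δ₀`, `s`, `n`
with `(sΔ)^(2Δ) ≤ n` there is a bipartite graph with `n` left vertices,
`⌈n^{3/Δ}⌉` right vertices and left degree at most `Δ` that is an
`(s,2)`-boundary expander. -/
theorem expander_exists :
    ∃ Δ₀ : ℕ, ∀ Δ s n : ℕ, Δ₀ ≤ Δ → (s * Δ) ^ (2 * Δ) ≤ n →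
      ∃ N : Fin n → Finset (Fin (⌈(n : ℝ) ^ ((3 : ℝ) / (Δ : ℝ))⌉₊)),
        (∀ u, (N u).card ≤ Δ) ∧
        ∀ U' : Finset (Fin n), U'.card ≤ s →
          2 * U'.card ≤ (bdry N U').card := by
  refine ⟨131072, fun Δ s n hΔ hsn => ?_⟩
  rcases Nat.eq_zero_or_pos s with hs0 | hs0
  · subst hs0
    refine ⟨fun _ => ∅, fun u => by simp, fun U' hU' => ?_⟩
    have : U' = ∅ := Finset.card_eq_zero.mp (by omega)
    subst this
    simp [bdry]
  -- main case
  have hΔ0 : 0 < Δ := by omega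
  set m := ⌈(n : ℝ) ^ ((3 : ℝ) / (Δ : ℝ))⌉₊ with hmdef
  have hsΔ1 : 1 ≤ s * Δ := Nat.one_le_iff_ne_zero.mpr (Nat.mul_ne_zero (by omega) (by omega))
  have hn1 : 1 ≤ n := le_trans (Nat.one_le_pow _ _ hsΔ1) hsn
  have hm : n ^ 3 ≤ m ^ Δ := by
    have h1 : ((n : ℝ) ^ ((3 : ℝ) / (Δ : ℝ))) ≤ (m : ℝ) := Nat.le_ceil _
    have h2 : ((n : ℝ) ^ ((3 : ℝ) / (Δ : ℝ)))^(Δ : ℕ) ≤ (m : ℝ)^(Δ : ℕ) := by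
      apply pow_le_pow_left₀ (Real.rpow_nonneg (by positivity) _) h1
    have h3 : ((n : ℝ) ^ ((3 : ℝ) / (Δ : ℝ)))^(Δ : ℕ) = (n : ℝ)^(3 : ℕ) := by
      rw [← Real.rpow_natCast ((n : ℝ) ^ ((3 : ℝ) / (Δ : ℝ))) Δ,
        ← Real.rpow_mul (by positivity)]
      have hΔne : (Δ : ℝ) ≠ 0 := by positivity
      rw [show (3 : ℝ) / (Δ : ℝ) * (Δ : ℕ) = (3 : ℝ) by field_simp]
      exact_mod_cast Real.rpow_natCast (n : ℝ) 3
    rw [h3] at h2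
    exact_mod_cast h2
  obtain ⟨f, hf⟩ := exists_good Δ s n m hΔ hs0 hsn hm
  exact ⟨fun u => Finset.image (f u) Finset.univ,
    fun u => le_trans (Finset.card_image_le) (by simp),
    hf⟩
end
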